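/- Let F be a field of characteristic p > 0 and φ = ⟨a₀,a₁,…,aₙ⟩ a diagonal quasilinear p-form over F with a₀ ≠ 0 and [F^p(a₁/a₀,…,aₙ/a₀) : F^p] = p^m. Then there exist m+1 purely inseparable field extensions E₀,…,E_m of F such that the numbers dim(φ_{E₀})_an,…,dim(φ_{E_m})_an are pairwise distinct; in particular, the set {dim(φ_E)_an : E a field extension of F} has at least m+1 elements. -/

import Mathlib

open scoped BigOperators

set_option synthInstance.maxHeartbeats 1000000
set_option maxHeartbeats 1000000

/-- The subfield `F^p` of `p`-th powers of `F` (generated as a subfield). -/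
def pPow (p : ℕ) (F : Type*) [Field F] : Subfield F :=
  Subfield.closure (Set.range fun x : F => x ^ p)

/-- The degree `[F^p(S) : F^p]`. -/
noncomputable def pDeg (p : ℕ) {F : Type*} [Field F] (S : Set F) : ℕ :=
  Module.finrank ↥(pPow p F) ↥(IntermediateField.adjoin ↥(pPow p F) S)

/-- A finite family `a : ι → F` is `p`-independent over `F` if
`[F^p(a i, i : ι) : F^p] = p ^ #ι`. -/
def pIndep (p : ℕ) {F : Type*} [Field F] {ι : Type*} [Fintype ι] (a : ι → F) : Prop :=
  pDeg p (Set.range a) = p ^ Fintype.card ι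

/-- The defect `i_d(φ_E)` of the diagonal quasilinear `p`-form with coefficients `a` over `E`:
the `E`-dimension of its zero set (an `E`-subspace in characteristic `p`). -/
noncomputable def defect (p : ℕ) (E : Type*) [Field E] {ι : Type*} [Fintype ι] (a : ι → E) : ℕ :=
  Module.finrank E ↥(Submodule.span E {x : ι → E | ∑ i, a i * x i ^ p = 0})

/-- A diagonal quasilinear `p`-form is anisotropic over `E`. -/
def Anisotropic (p : ℕ) (E : Type*) [Field E] {ι : Type*} [Fintype ι] (a : ι → E) : Prop :=
  ∀ x : ι → E, ∑ i, a i * x i ^ p = 0 → x = 0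

/-- The value set `D_E(φ)` of a diagonal quasilinear `p`-form. -/
def valueSet (p : ℕ) (E : Type*) [Field E] {ι : Type*} [Fintype ι] (a : ι → E) : Set E :=
  {y | ∃ x : ι → E, y = ∑ i, a i * x i ^ p}
universe u


open Module Set IntermediateField Polynomial

theorem pPow_coe (p : ℕ) [Fact p.Prime] (F : Type*) [Field F] [CharP F p] :
    ((pPow p F : Subfield F) : Set F) = Set.range fun x : F => x ^ p := by
  have h : (Set.range fun x : F => x ^ p) = ((frobenius F p).fieldRange : Set F) := by
    ext y
    simp [RingHom.mem_fieldRange, frobenius_def, eq_comm]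
  rw [pPow, h, Subfield.closure_eq]

theorem finrank_eq_of_ringEquiv {K : Type*} {K' : Type*} [Field K] [Field K']
    {V : Type*} {V' : Type*} [AddCommGroup V] [AddCommGroup V'] [Module K V] [Module K' V']
    (i : K ≃+* K') (j : V ≃+ V') (hc : ∀ (r : K) (v : V), j (r • v) = i r • j v) :
    Module.finrank K V = Module.finrank K' V' := by
  have h := lift_rank_eq_of_equiv_equiv (R := K) (R' := K') (M := V) (M' := V')
    (i : K → K') j i.bijective hc
  simpa [Module.finrank] using congrArg Cardinal.toNat h

theorem defect_formula (p : ℕ) [Fact p.Prime] (E : Type*) [Field E] [CharP E p] {ι : Type*} [Fintype ι]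
    (a : ι → E) (Ω : Type*) [Field Ω] [CharP Ω p] (f : E →+* Ω) (K : Subfield Ω)
    (hK : ∀ x : Ω, x ∈ K ↔ ∃ y : E, f y ^ p = x) :
    defect p E a
        + finrank ↥K ↥(Submodule.span ↥K (Set.range fun i => f (a i))) = Fintype.card ι := by
  haveI : ExpChar E p := ExpChar.prime Fact.out
  haveI : ExpChar Ω p := ExpChar.prime Fact.out
  have hp0 : p ≠ 0 := (Fact.out : p.Prime).ne_zero
  set v : ι → Ω := fun i => f (a i) with hv
  set g : (ι → ↥K) →ₗ[↥K] Ω := Fintype.linearCombination ↥K v with hg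
  have hsmul : ∀ (c : ↥K) (w : Ω), c • w = (c : Ω) * w := fun c w => rfl
  have hrange : LinearMap.range g = Submodule.span ↥K (Set.range v) := by
    rw [hg, Fintype.range_linearCombination]
  have hrn := g.finrank_range_add_finrank_ker
  rw [hrange, Module.finrank_fintype_fun_eq_card] at hrn
  -- the solution submodule
  set W : Submodule E (ι → E) :=
    { carrier := {x : ι → E | ∑ i, a i * x i ^ p = 0}
      add_mem' := by
        intro x y hx hy
        simp only [Set.mem_setOf_eq, Pi.add_apply] at *
        have : ∀ i, a i * (x i + y i) ^ p = a i * x i ^ p + a i * y i ^ p := by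
          intro i; rw [add_pow_char, mul_add]
        rw [Finset.sum_congr rfl fun i _ => this i, Finset.sum_add_distrib, hx, hy, add_zero]
      zero_mem' := by simp [zero_pow hp0]
      smul_mem' := by
        intro c x hx
        simp only [Set.mem_setOf_eq, Pi.smul_apply, smul_eq_mul] at *
        have : ∀ i, a i * (c * x i) ^ p = c ^ p * (a i * x i ^ p) := by
          intro i; rw [mul_pow]; ring
        rw [Finset.sum_congr rfl fun i _ => this i, ← Finset.mul_sum, hx, mul_zero] } with hW
  have hspan : Submodule.span E {x : ι → E | ∑ i, a i * x i ^ p = 0} = W :=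
    Submodule.span_eq W
  have hdef : defect p E a = finrank E ↥W := by
    unfold defect
    rw [hspan]
  -- ring equiv E ≃+* K
  have hmem : ∀ x : E, f x ^ p ∈ K := fun x => (hK _).mpr ⟨x, rfl⟩
  set eh : E →+* ↥K :=
    { toFun := fun x => ⟨f x ^ p, hmem x⟩
      map_one' := by ext; simp
      map_mul' := by intro x y; ext; simp [mul_pow]
      map_zero' := by ext; simp [zero_pow hp0]
      map_add' := by intro x y; ext; simp [add_pow_char] } with heh
  have hehinj : Function.Injective eh := by
    intro x y hxy
    have h1 : f x ^ p = f y ^ p := congrArg Subtype.val hxy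
    exact f.injective (frobenius_inj Ω p h1)
  have hehsurj : Function.Surjective eh := by
    rintro ⟨y, hy⟩
    obtain ⟨x, hx⟩ := (hK y).mp hy
    exact ⟨x, Subtype.ext hx⟩
  set e : E ≃+* ↥K := RingEquiv.ofBijective eh ⟨hehinj, hehsurj⟩ with he
  -- additive equiv between W and ker g
  have hker : ∀ x : ι → E, (∑ i, a i * x i ^ p = 0) ↔ (fun i => e (x i)) ∈ LinearMap.ker g := by
    intro x
    have happ : g (fun i => e (x i)) = f (∑ i, a i * x i ^ p) := by
      rw [hg, Fintype.linearCombination_apply, map_sum]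
      refine Finset.sum_congr rfl fun i _ => ?_
      rw [hsmul, map_mul, map_pow]
      show (f (x i) ^ p) * f (a i) = f (a i) * f (x i) ^ p
      ring
    constructor
    · intro hx
      rw [LinearMap.mem_ker, happ, hx, map_zero]
    · intro hx
      rw [LinearMap.mem_ker, happ] at hx
      exact f.injective (by rwa [map_zero])
  set j : ↥W ≃+ ↥(LinearMap.ker g) :=
    { toFun := fun x => ⟨fun i => e (x.1 i), (hker x.1).mp x.2⟩
      invFun := fun y => ⟨fun i => e.symm (y.1 i), by
        have : (fun i => e (e.symm (y.1 i))) ∈ LinearMap.ker g := by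
          simpa [RingEquiv.apply_symm_apply] using y.2
        exact (hker _).mpr this⟩
      left_inv := by intro x; ext i; simp
      right_inv := by intro y; ext i; simp
      map_add' := by intro x y; ext i; simp } with hj
  have hcompat : ∀ (r : E) (x : ↥W), j (r • x) = e r • j x := by
    intro r x
    ext i
    show (e (r * x.1 i) : Ω) = ((((e r : ↥K) • (j x).1) i : ↥K) : Ω)
    have h1 : ((e r : ↥K) • (j x).1) i = e r * e (x.1 i) := rfl
    rw [h1, map_mul]
  have hWK : finrank E ↥W = finrank ↥K ↥(LinearMap.ker g) :=
    finrank_eq_of_ringEquiv e j hcompat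
  rw [hdef, hWK]
  rw [add_comm] at hrn
  exact hrn



theorem span_subfield_le {Ω : Type*} [Field Ω] {K K' : Subfield Ω} (hKK' : K ≤ K')
    (t : Set Ω) : (Submodule.span ↥K t : Set Ω) ⊆ ↑(Submodule.span ↥K' t) := by
  intro x hx
  induction hx using Submodule.span_induction with
  | mem y hy => exact Submodule.subset_span hy
  | zero => exact Submodule.zero_mem _
  | add y z _ _ h1 h2 => exact Submodule.add_mem _ h1 h2
  | smul c y _ hy => exact Submodule.smul_mem _ (⟨c.1, hKK' c.2⟩ : ↥K') hy

theorem span_finrank_lt {Ω : Type*} [Field Ω] {K K' : Subfield Ω} (hKK' : K ≤ K')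
    {ι : Type*} [Fintype ι] (v : ι → Ω) (i0 i1 : ι) (b : Ω)
    (hu0 : v i0 ≠ 0) (hb : v i1 = b * v i0) (hbK : b ∉ K) (hbK' : b ∈ K') :
    finrank ↥K' ↥(Submodule.span ↥K' (Set.range v))
      < finrank ↥K ↥(Submodule.span ↥K (Set.range v)) := by
  set S := Set.range v with hS
  set u := v i0 with hu'
  set w := v i1 with hw'
  have hu : u ∈ S := ⟨i0, rfl⟩
  have hw : w ∈ S := ⟨i1, rfl⟩
  have huw : w ≠ u := by
    intro h
    apply hbK
    have h1 : b * u = 1 * u := by rw [one_mul, ← hb, h]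
    have : b = 1 := mul_right_cancel₀ hu0 h1
    rw [this]; exact one_mem K
  have hwspan : w ∉ Submodule.span ↥K ({u} : Set Ω) := by
    intro hmem
    obtain ⟨c, hc⟩ := Submodule.mem_span_singleton.mp hmem
    have hcu : (c : Ω) * u = w := hc
    have : (c : Ω) = b := mul_right_cancel₀ hu0 (hcu.trans hb)
    exact hbK (this ▸ c.2)
  have hPind : LinearIndepOn ↥K id (insert w {u} : Set Ω) := by
    rw [linearIndepOn_insert (by simpa using huw)]
    exact ⟨LinearIndepOn.singleton hu0, by simpa using hwspan⟩
  have hPS : (insert w {u} : Set Ω) ⊆ S := by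
    rintro x hx
    rcases hx with rfl | rfl
    · exact hw
    · exact hu
  set B := hPind.extend hPS with hB
  have hBS : B ⊆ S := hPind.extend_subset hPS
  have hPB : (insert w {u} : Set Ω) ⊆ B := hPind.subset_extend hPS
  have hSspan : S ⊆ ↑(Submodule.span ↥K B) := hPind.subset_span_extend hPS
  have hBind : LinearIndependent ↥K ((↑) : B → Ω) := hPind.linearIndepOn_extend hPS
  have hBfin : B.Finite := (Set.finite_range v).subset hBS
  letI : Fintype B := hBfin.fintype
  have hwB : w ∈ B := hPB (Set.mem_insert _ _)
  have huB' : u ∈ B \ {w} := ⟨hPB (Set.mem_insert_of_mem _ rfl), by simpa using huw.symm⟩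
  have hspanEq : Submodule.span ↥K S = Submodule.span ↥K B :=
    le_antisymm (Submodule.span_le.2 hSspan) (Submodule.span_mono hBS)
  have hrkK : finrank ↥K ↥(Submodule.span ↥K S) = B.toFinset.card := by
    rw [hspanEq]
    exact finrank_span_set_eq_card hBind
  -- over K'
  have hws : w ∈ Submodule.span ↥K' (B \ {w} : Set Ω) := by
    have heq : (⟨b, hbK'⟩ : ↥K') • u = w := by
      show b * u = w; rw [← hb]
    have h0 := Submodule.smul_mem (Submodule.span ↥K' (B \ {w} : Set Ω)) (⟨b, hbK'⟩ : ↥K')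
      (Submodule.subset_span huB')
    rwa [heq] at h0
  have h3 : Submodule.span ↥K' B ≤ Submodule.span ↥K' (B \ {w} : Set Ω) := by
    rw [Submodule.span_le]
    intro y hy
    by_cases hyw : y = w
    · subst hyw; exact hws
    · exact Submodule.subset_span ⟨hy, hyw⟩
  have h4 : Submodule.span ↥K' S ≤ Submodule.span ↥K' (B \ {w} : Set Ω) := by
    rw [Submodule.span_le]
    intro x hx
    exact h3 (span_subfield_le hKK' B (hSspan hx))
  have hBw : (B \ {w} : Set Ω).Finite := hBfin.subset Set.diff_subset
  letI : Fintype ↥(B \ {w} : Set Ω) := hBw.fintype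
  haveI : Module.Finite ↥K' ↥(Submodule.span ↥K' (B \ {w} : Set Ω)) :=
    FiniteDimensional.span_of_finite ↥K' hBw
  have hrk' : finrank ↥K' ↥(Submodule.span ↥K' S)
      ≤ (B \ {w} : Set Ω).toFinset.card :=
    le_trans (Submodule.finrank_mono h4) (finrank_span_le_card _)
  have hcard : (B \ {w} : Set Ω).toFinset.card < B.toFinset.card := by
    apply Finset.card_lt_card
    rw [Finset.ssubset_iff_of_subset]
    · exact ⟨w, by simpa using hwB⟩
    · intro x hx
      simp only [Set.mem_toFinset] at *
      exact hx.1
  rw [hrkK]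
  exact lt_of_le_of_lt hrk' hcard


theorem finrank_adjoin_p {K F : Type*} [Field K] [Field F] [Algebra K F]
    (p : ℕ) [Fact p.Prime] [CharP F p] (b : F) (hb : b ∉ Set.range (algebraMap K F))
    (y : K) (hy : algebraMap K F y = b ^ p) :
    finrank K ↥(IntermediateField.adjoin K {b}) = p := by
  have hp : p.Prime := Fact.out
  have hirr : Irreducible (X ^ p - C y : K[X]) := by
    apply X_pow_sub_C_irreducible_of_prime hp
    intro z hz
    apply hb
    refine ⟨z, ?_⟩
    have h1 : algebraMap K F z ^ p = b ^ p := by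
      rw [← map_pow, hz, hy]
    exact frobenius_inj F p h1
  have hroot : Polynomial.aeval b (X ^ p - C y : K[X]) = 0 := by
    simp [hy]
  have hint : IsIntegral K b := by
    refine ⟨X ^ p - C y, ?_, ?_⟩
    · exact monic_X_pow_sub_C y hp.ne_zero
    · simpa [Polynomial.eval_map, ← Polynomial.aeval_def] using hroot
  have hmin : minpoly K b = X ^ p - C y :=
    (minpoly.eq_of_irreducible_of_monic hirr hroot (monic_X_pow_sub_C y hp.ne_zero)).symm
  rw [IntermediateField.adjoin.finrank hint, hmin]
  rw [Polynomial.natDegree_X_pow_sub_C]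





theorem chainAux (p : ℕ) [Fact p.Prime] (F : Type*) [Field F] [CharP F p]
    {ι : Type*} [Fintype ι] (c : ι → F) :
    ∀ (j : ℕ) (K : IntermediateField ↥(pPow p F) F),
    K ≤ IntermediateField.adjoin ↥(pPow p F) (Set.range c) →
    finrank ↥(pPow p F) ↥(IntermediateField.adjoin ↥(pPow p F) (Set.range c))
      = finrank ↥(pPow p F) ↥K * p ^ j →
    ∃ κ : ℕ → IntermediateField ↥(pPow p F) F, κ 0 = K ∧
      ∀ l, l < j → ∃ b, (b ∈ Set.range c) ∧ b ∉ κ l ∧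
        (κ (l + 1)).toSubfield = Subfield.closure (↑(κ l).toSubfield ∪ {b}) := by
  have hp : p.Prime := Fact.out
  have hcp : ∀ x : F, x ^ p ∈ pPow p F := fun x => Subfield.subset_closure ⟨x, rfl⟩
  set K₀ := pPow p F with hK₀
  set T := IntermediateField.adjoin ↥K₀ (Set.range c) with hT
  have hint : ∀ x ∈ Set.range c, IsIntegral ↥K₀ x := by
    rintro x ⟨i, rfl⟩
    refine ⟨Polynomial.X ^ p - Polynomial.C (⟨(c i) ^ p, hcp (c i)⟩ : ↥K₀), ?_, ?_⟩
    · exact Polynomial.monic_X_pow_sub_C _ hp.ne_zero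
    · simp only [Polynomial.eval₂_sub, Polynomial.eval₂_X_pow, Polynomial.eval₂_C]
      show c i ^ p - ((⟨(c i) ^ p, hcp (c i)⟩ : ↥K₀) : F) = 0
      simp
  haveI : Finite ↥(Set.range c) := Set.finite_range c
  haveI hTfd : FiniteDimensional ↥K₀ ↥T := IntermediateField.finiteDimensional_adjoin hint
  intro j
  induction j with
  | zero => intro K _ _; exact ⟨fun _ => K, rfl, fun l hl => absurd hl (Nat.not_lt_zero l)⟩
  | succ j IH =>
    intro K hKT hdeg
    have hTpos : 0 < finrank ↥K₀ ↥T := finrank_pos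
    have hdpos : 0 < finrank ↥K₀ ↥K := by
      rcases Nat.eq_zero_or_pos (finrank ↥K₀ ↥K) with h | h
      · rw [h, zero_mul] at hdeg; omega
      · exact h
    -- find b = c i not in K
    have hex : ∃ i, c i ∉ K := by
      by_contra h
      push_neg at h
      have hTK : T ≤ K := IntermediateField.adjoin_le_iff.2 (by rintro x ⟨i, rfl⟩; exact h i)
      have hKeq : K = T := le_antisymm hKT hTK
      rw [← hKeq] at hdeg
      have h1 : p ^ (j + 1) = 1 := by
        have := Nat.eq_of_mul_eq_mul_left hdpos (hdeg.symm.trans (mul_one _).symm)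
        omega
      have h2 : 1 < p ^ (j + 1) := Nat.one_lt_pow (by omega) hp.one_lt
      omega
    obtain ⟨i, hbK⟩ := hex
    set b := c i with hb
    have hbrange : b ∉ Set.range (algebraMap ↥K F) := by
      rintro ⟨z, hz⟩
      exact hbK (hz ▸ z.2)
    have hbpK : ((⟨b ^ p, hcp b⟩ : ↥K₀) : F) ∈ K := by
      exact K.algebraMap_mem (⟨b ^ p, hcp b⟩ : ↥K₀)
    set K'' := IntermediateField.adjoin ↥K {b} with hK''
    have hK''rank : finrank ↥K ↥K'' = p :=
      finrank_adjoin_p p b hbrange ⟨b ^ p, hbpK⟩ rfl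
    set K' := K''.restrictScalars ↥K₀ with hK'
    have hrank' : finrank ↥K₀ ↥K' = finrank ↥K₀ ↥K * p := by
      rw [← hK''rank]
      exact (Module.finrank_mul_finrank ↥K₀ ↥K ↥K'').symm
    have hK'T : K' ≤ T := by
      intro x hx
      have hx' : x ∈ Subfield.closure (Set.range (algebraMap ↥K F) ∪ {b}) := hx
      have hsub : Subfield.closure (Set.range (algebraMap ↥K F) ∪ {b}) ≤ T.toSubfield := by
        apply Subfield.closure_le.2
        rintro y (⟨z, rfl⟩ | rfl)
        · exact hKT z.2
        · exact IntermediateField.subset_adjoin _ _ ⟨i, rfl⟩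
      exact hsub hx'
    have hdeg' : finrank ↥K₀ ↥T = finrank ↥K₀ ↥K' * p ^ j := by
      rw [hrank', hdeg, pow_succ]
      ring
    obtain ⟨κ', hκ'0, hκ'⟩ := IH K' hK'T hdeg'
    refine ⟨fun l => Nat.casesOn l K (fun l' => κ' l'), rfl, ?_⟩
    intro l hl
    cases l with
    | zero =>
      refine ⟨b, ⟨i, rfl⟩, hbK, ?_⟩
      show (κ' 0).toSubfield = _
      rw [hκ'0, hK']
      rw [IntermediateField.restrictScalars_toSubfield]
      show (IntermediateField.adjoin ↥K {b}).toSubfield = _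
      have : (IntermediateField.adjoin ↥K {b}).toSubfield
          = Subfield.closure (Set.range (algebraMap ↥K F) ∪ {b}) := rfl
      rw [this]
      congr 1
      congr 1
      ext x
      constructor
      · rintro ⟨z, rfl⟩; exact z.2
      · intro hx; exact ⟨⟨x, hx⟩, rfl⟩
    | succ l' =>
      have hl' : l' < j := by omega
      obtain ⟨b', hb'1, hb'2, hb'3⟩ := hκ' l' hl'
      exact ⟨b', hb'1, hb'2, hb'3⟩


theorem isPurelyInseparable_adjoin_of_pow_mem (p : ℕ) [Fact p.Prime] (F : Type*) [Field F]
    [CharP F p] {Ω : Type*} [Field Ω] [Algebra F Ω] (S : Set Ω)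
    (hS : ∀ x ∈ S, ∃ z : F, x ^ p = algebraMap F Ω z) :
    IsPurelyInseparable F ↥(IntermediateField.adjoin F S) := by
  haveI : ExpChar F p := ExpChar.prime Fact.out
  haveI : CharP Ω p := charP_of_injective_ringHom (algebraMap F Ω).injective p
  haveI : ExpChar Ω p := ExpChar.prime Fact.out
  have hlift : ∀ (x : Ω) (n1 n2 : ℕ), n1 ≤ n2 → (∃ z : F, x ^ p ^ n1 = algebraMap F Ω z) →
      ∃ z : F, x ^ p ^ n2 = algebraMap F Ω z := by
    rintro x n1 n2 h ⟨z, hz⟩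
    refine ⟨z ^ p ^ (n2 - n1), ?_⟩
    have hpow : p ^ n1 * p ^ (n2 - n1) = p ^ n2 := by rw [← pow_add]; congr 1; omega
    rw [map_pow, ← hz, ← pow_mul, hpow]
  have key : ∀ x ∈ IntermediateField.adjoin F S,
      ∃ (nn : ℕ) (z : F), x ^ p ^ nn = algebraMap F Ω z := by
    intro x hx
    induction hx using IntermediateField.adjoin_induction with
    | mem y hy => obtain ⟨z, hz⟩ := hS y hy; exact ⟨1, z, by rw [pow_one]; exact hz⟩
    | algebraMap y => exact ⟨0, y, by rw [pow_zero, pow_one]⟩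
    | add y z hy' hz' hy hz =>
        obtain ⟨n1, z1, h1⟩ := hy
        obtain ⟨n2, z2, h2⟩ := hz
        obtain ⟨w1, hw1⟩ := hlift y n1 (max n1 n2) (le_max_left _ _) ⟨z1, h1⟩
        obtain ⟨w2, hw2⟩ := hlift z n2 (max n1 n2) (le_max_right _ _) ⟨z2, h2⟩
        exact ⟨max n1 n2, w1 + w2, by rw [add_pow_expChar_pow, hw1, hw2, map_add]⟩
    | inv y hy' hy =>
        obtain ⟨n1, z1, h1⟩ := hy
        exact ⟨n1, z1⁻¹, by rw [inv_pow, h1, map_inv₀]⟩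
    | mul y z hy' hz' hy hz =>
        obtain ⟨n1, z1, h1⟩ := hy
        obtain ⟨n2, z2, h2⟩ := hz
        obtain ⟨w1, hw1⟩ := hlift y n1 (max n1 n2) (le_max_left _ _) ⟨z1, h1⟩
        obtain ⟨w2, hw2⟩ := hlift z n2 (max n1 n2) (le_max_right _ _) ⟨z2, h2⟩
        exact ⟨max n1 n2, w1 * w2, by rw [mul_pow, hw1, hw2, map_mul]⟩
  rw [isPurelyInseparable_iff_pow_mem F p]
  intro x
  obtain ⟨nn, z, hz⟩ := key x.1 x.2
  refine ⟨nn, z, ?_⟩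
  apply Subtype.ext
  show (algebraMap F ↥(IntermediateField.adjoin F S) z : Ω) = ((x ^ p ^ nn : _) : Ω)
  have h2 : ((x ^ p ^ nn : _) : Ω) = (x : Ω) ^ p ^ nn := rfl
  rw [h2, hz]
  exact (IsScalarTower.algebraMap_apply F ↥(IntermediateField.adjoin F S) Ω z).symm

theorem Subfield.closure_closure_union {F : Type*} [Field F] (A B : Set F) :
    Subfield.closure (↑(Subfield.closure A) ∪ B) = Subfield.closure (A ∪ B) := by
  apply le_antisymm
  · rw [Subfield.closure_le]
    rintro x (hx | hx)
    · exact Subfield.closure_mono Set.subset_union_left hx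
    · exact Subfield.subset_closure (Or.inr hx)
  · exact Subfield.closure_mono (Set.union_subset_union_left B Subfield.subset_closure)

theorem card_fullSplittingPattern_ge (p : ℕ) [Fact p.Prime] (F : Type u) [Field F] [CharP F p]
    (n : ℕ) (a : Fin (n + 1) → F) (ha0 : a 0 ≠ 0) (m : ℕ)
    (hdeg : pDeg p (Set.range fun i : Fin n => a i.succ / a 0) = p ^ m) :
    (∃ E : Fin (m + 1) → IntermediateField F (AlgebraicClosure F),
        (∀ i, IsPurelyInseparable F ↥(E i)) ∧
        Function.Injective fun i =>
          (n + 1) - defect p ↥(E i) (fun j => algebraMap F ↥(E i) (a j))) ∧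
      m + 1 ≤ Set.ncard {d : ℕ | ∃ (E : Type u) (_ : Field E) (_ : Algebra F E),
        (n + 1) - defect p E (fun j => algebraMap F E (a j)) = d} := by
  classical
  have hp : p.Prime := Fact.out
  set Ω := AlgebraicClosure F with hΩ
  set ι' : F →+* Ω := algebraMap F Ω with hι'
  set c : Fin n → F := fun i => a i.succ / a 0 with hc
  -- the chain of intermediate fields on the F side
  obtain ⟨κ, hκ0, hκ⟩ := chainAux p F c m ⊥ bot_le (by
    rw [IntermediateField.finrank_bot, one_mul]
    exact hdeg)
  choose bfun hbc hbnot hbcl using hκ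
  -- p-th roots in Ω
  have hρ' : ∀ (l : ℕ) (hl : l < m), ∃ z : Ω, z ^ p = ι' (bfun l hl) := fun l hl =>
    IsAlgClosed.exists_pow_nat_eq _ hp.pos
  choose ρ hρeq using hρ'
  set bset : ℕ → Set F := fun k => {x : F | ∃ (l : ℕ) (hl : l < m), l < k ∧ x = bfun l hl}
    with hbsetdef
  set rset : ℕ → Set Ω := fun k => {x : Ω | ∃ (l : ℕ) (hl : l < m), l < k ∧ x = ρ l hl}
    with hrsetdef
  set E : ℕ → IntermediateField F Ω := fun k => IntermediateField.adjoin F (rset k) with hEdef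
  -- purely inseparable
  have hPI : ∀ k, IsPurelyInseparable F ↥(E k) := by
    intro k
    apply isPurelyInseparable_adjoin_of_pow_mem p F
    rintro x ⟨l, hl, hlk, rfl⟩
    exact ⟨bfun l hl, hρeq l hl⟩
  -- description of the subfields κ k
  have hκsub : ∀ k, k ≤ m →
      (κ k).toSubfield = Subfield.closure (↑(pPow p F) ∪ bset k) := by
    intro k
    induction k with
    | zero =>
      intro _
      have h0 : bset 0 = ∅ := by
        ext x
        simp only [hbsetdef, Set.mem_setOf_eq, Set.mem_empty_iff_false, iff_false]
        rintro ⟨l, hl, hlk, _⟩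
        omega
      rw [hκ0, h0, Set.union_empty, Subfield.closure_eq]
      apply SetLike.ext'
      rw [IntermediateField.coe_toSubfield, IntermediateField.coe_bot]
      ext x
      constructor
      · rintro ⟨z, rfl⟩; exact z.2
      · intro hx; exact ⟨⟨x, hx⟩, rfl⟩
    | succ k IHk =>
      intro hk
      have hkm : k < m := by omega
      rw [hbcl k hkm, IHk (by omega), Subfield.closure_closure_union]
      congr 1
      rw [Set.union_assoc]
      congr 1
      ext x
      simp only [hbsetdef, Set.mem_setOf_eq, Set.union_singleton, Set.mem_insert_iff]
      constructor
      · rintro (rfl | ⟨l, hl, hlk, rfl⟩)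
        · exact ⟨k, hkm, by omega, rfl⟩
        · exact ⟨l, hl, by omega, rfl⟩
      · rintro ⟨l, hl, hlk, rfl⟩
        rcases Nat.lt_succ_iff_lt_or_eq.mp hlk with h | rfl
        · exact Or.inr ⟨l, hl, h, rfl⟩
        · exact Or.inl rfl
  set KΩ : ℕ → Subfield Ω := fun k => ((κ k).toSubfield).map ι' with hKΩdef
  -- frobenius image of E k
  have hfrob : ∀ k, k ≤ m → ((E k).toSubfield).map (frobenius Ω p) = KΩ k := by
    intro k hk
    have h1 : (E k).toSubfield = Subfield.closure (Set.range ι' ∪ rset k) := rfl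
    rw [h1, RingHom.map_field_closure]
    have h2 : KΩ k = Subfield.closure (⇑ι' '' (↑(pPow p F) ∪ bset k)) := by
      show Subfield.map ι' (κ k).toSubfield = _
      rw [hκsub k hk, RingHom.map_field_closure]
    have e1 : ⇑(frobenius Ω p) '' Set.range ⇑ι' = ⇑ι' '' ↑(pPow p F) := by
      ext x
      constructor
      · rintro ⟨y, ⟨z, rfl⟩, rfl⟩
        refine ⟨z ^ p, ?_, ?_⟩
        · rw [pPow_coe]; exact ⟨z, rfl⟩
        · simp [frobenius_def, map_pow]
      · rintro ⟨y, hy, rfl⟩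
        rw [pPow_coe] at hy
        obtain ⟨z, rfl⟩ := hy
        exact ⟨ι' z, ⟨z, rfl⟩, by simp [frobenius_def, map_pow]⟩
    have e2 : ⇑(frobenius Ω p) '' rset k = ⇑ι' '' bset k := by
      ext x
      constructor
      · rintro ⟨y, ⟨l, hl, hlk, rfl⟩, rfl⟩
        refine ⟨bfun l hl, ⟨l, hl, hlk, rfl⟩, ?_⟩
        simp only [frobenius_def]
        exact (hρeq l hl).symm
      · rintro ⟨y, ⟨l, hl, hlk, rfl⟩, rfl⟩
        refine ⟨ρ l hl, ⟨l, hl, hlk, rfl⟩, ?_⟩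
        simp only [frobenius_def]
        exact hρeq l hl
    rw [h2, Set.image_union, Set.image_union, e1, e2]
  set D : ℕ → ℕ := fun k =>
    finrank ↥(KΩ k) ↥(Submodule.span ↥(KΩ k) (Set.range fun i : Fin (n + 1) => ι' (a i)))
    with hDdef
  -- defect computation
  have hdefect : ∀ k, k ≤ m →
      defect p ↥(E k) (fun j => algebraMap F ↥(E k) (a j)) + D k = n + 1 := by
    intro k hk
    haveI : CharP ↥(E k) p := charP_of_injective_ringHom (algebraMap F ↥(E k)).injective p
    have hKiff : ∀ x : Ω, x ∈ KΩ k ↔ ∃ y : ↥(E k), (algebraMap ↥(E k) Ω) y ^ p = x := by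
      intro x
      rw [← hfrob k hk]
      constructor
      · rintro ⟨y, hy, rfl⟩
        exact ⟨⟨y, hy⟩, rfl⟩
      · rintro ⟨y, rfl⟩
        exact ⟨(y : Ω), y.2, rfl⟩
    have h := defect_formula p ↥(E k) (fun j => algebraMap F ↥(E k) (a j)) Ω
      (algebraMap ↥(E k) Ω) (KΩ k) hKiff
    have hfa : (fun i : Fin (n + 1) => (algebraMap ↥(E k) Ω) ((algebraMap F ↥(E k)) (a i)))
        = fun i : Fin (n + 1) => ι' (a i) :=
      funext fun i => (IsScalarTower.algebraMap_apply F ↥(E k) Ω (a i)).symm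
    rw [hfa, Fintype.card_fin] at h
    exact h
  -- strict decrease
  have hstep : ∀ k, k < m → D (k + 1) < D k := by
    intro k hkm
    obtain ⟨i, hi⟩ := hbc k hkm
    have hκle : (κ k).toSubfield ≤ (κ (k + 1)).toSubfield := by
      rw [hbcl k hkm]
      intro x hx
      exact Subfield.subset_closure (Or.inl hx)
    have hKK' : KΩ k ≤ KΩ (k + 1) := by
      rintro x ⟨y, hy, rfl⟩
      exact ⟨y, hκle hy, rfl⟩
    apply span_finrank_lt hKK' (fun i : Fin (n + 1) => ι' (a i)) 0 i.succ (ι' (bfun k hkm))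
    · intro h
      exact ha0 (ι'.injective (by rw [h, map_zero]))
    · rw [← map_mul]
      congr 1
      rw [← hi]
      show a i.succ = a i.succ / a 0 * a 0
      field_simp
    · rintro ⟨y, hy, hyeq⟩
      have : y = bfun k hkm := ι'.injective hyeq
      subst this
      exact hbnot k hkm hy
    · refine ⟨bfun k hkm, ?_, rfl⟩
      rw [hbcl k hkm]
      exact Subfield.subset_closure (Or.inr rfl)
  have hanti : ∀ k2, k2 ≤ m → ∀ k1, k1 < k2 → D k2 < D k1 := by
    intro k2
    induction k2 with
    | zero => intro _ k1 hk1; omega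
    | succ k2 IH =>
      intro hk2 k1 hk1
      have h1 : D (k2 + 1) < D k2 := hstep k2 (by omega)
      rcases Nat.lt_succ_iff_lt_or_eq.mp hk1 with h | rfl
      · exact lt_trans h1 (IH (by omega) k1 h)
      · exact h1
  have hval : ∀ k, k ≤ m →
      (n + 1) - defect p ↥(E k) (fun j => algebraMap F ↥(E k) (a j)) = D k := by
    intro k hk
    have := hdefect k hk
    omega
  have hinj : Function.Injective fun i : Fin (m + 1) =>
      (n + 1) - defect p ↥(E i.val) (fun j => algebraMap F ↥(E i.val) (a j)) := by
    intro x y hxy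
    simp only at hxy
    rw [hval x.val (by omega), hval y.val (by omega)] at hxy
    by_contra hne
    have hvne : x.val ≠ y.val := fun h => hne (Fin.ext h)
    rcases lt_or_gt_of_ne hvne with h | h
    · have := hanti y.val (by omega) x.val h
      omega
    · have := hanti x.val (by omega) y.val h
      omega
  constructor
  · exact ⟨fun i => E i.val, fun i => hPI i.val, hinj⟩
  · set Sset := {d : ℕ | ∃ (E : Type u) (_ : Field E) (_ : Algebra F E),
      (n + 1) - defect p E (fun j => algebraMap F E (a j)) = d} with hSset
    have hSfin : Sset.Finite := by
      apply (Set.finite_Iic (n + 1)).subset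
      rintro d ⟨E', _, _, rfl⟩
      exact Set.mem_Iic.mpr (Nat.sub_le _ _)
    set g : Fin (m + 1) → ℕ := fun i =>
      (n + 1) - defect p ↥(E i.val) (fun j => algebraMap F ↥(E i.val) (a j)) with hgdef
    have hrange : Set.range g ⊆ Sset := by
      rintro d ⟨i, rfl⟩
      exact ⟨↥(E i.val), inferInstance, inferInstance, rfl⟩
    have hcardrange : (Set.range g).ncard = m + 1 := by
      rw [← Set.image_univ, Set.ncard_image_of_injective _ hinj, Set.ncard_univ,
        Nat.card_eq_fintype_card, Fintype.card_fin]
    rw [← hcardrange]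
    exact Set.ncard_le_ncard hrange hSfin
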